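/- If A is an n×n matrix over a field and, during the pivoting inverse algorithm, some not-yet-pivoted row p has all entries zero in the not-yet-pivoted columns (L = ∅), then A is not invertible. -/

import Mathlib

/-- The dictionary pivot operation at position `(p, k)`: the pivot entry is
reciprocated, the pivot row is divided by the pivot, the pivot column is
divided by the negative of the pivot, and the remaining entries are updated
by the rectangle rule. -/
def dictPivot {n : ℕ} {F : Type*} [Field F]
    (A : Matrix (Fin n) (Fin n) F) (p k : Fin n) : Matrix (Fin n) (Fin n) F :=
  Matrix.of fun i j =>
    if i = p then
      (if j = k then (A p k)⁻¹ else A p j / A p k)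
    else
      (if j = k then -(A i k) / A p k else A i j - A i k * A p j / A p k)

theorem det_eq_zero_of_stuck_row {n m : ℕ} {F : Type*} [Field F]
    (A : Matrix (Fin n) (Fin n) F)
    (rows cols : Fin m → Fin n)
    (hrows : Function.Injective rows) (hcols : Function.Injective cols)
    (seq : Fin (m + 1) → Matrix (Fin n) (Fin n) F)
    (h0 : seq 0 = A)
    (hstep : ∀ t : Fin m,
      seq t.castSucc (rows t) (cols t) ≠ 0 ∧
      seq t.succ = dictPivot (seq t.castSucc) (rows t) (cols t))
    (p : Fin n) (hp : p ∉ Set.range rows)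
    (hrow : ∀ k : Fin n, k ∉ Set.range cols → seq (Fin.last m) p k = 0) :
    A.det = 0 := by
  classical
  -- The key identity: for every x, a fixed linear combination of entries of A *ᵥ x vanishes.
  have key : ∀ x : Fin n → F,
      (A.mulVec x) p
        + ∑ s : Fin m, seq (Fin.last m) p (cols s) * (A.mulVec x) (rows s) = 0 := by
    intro x
    set y := A.mulVec x with hy
    -- "output" of row i and "input" of column j at step t
    set o : Fin (m + 1) → Fin n → F := fun t i =>
      if h : ∃ s : Fin m, s.castSucc < t ∧ rows s = i then -x (cols h.choose) else y i
      with ho_def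
    set u : Fin (m + 1) → Fin n → F := fun t j =>
      if h : ∃ s : Fin m, s.castSucc < t ∧ cols s = j then -y (rows h.choose) else x j
      with hu_def
    have o_pos : ∀ (t : Fin (m + 1)) (s : Fin m), s.castSucc < t →
        o t (rows s) = -x (cols s) := by
      intro t s hst
      have h : ∃ s' : Fin m, s'.castSucc < t ∧ rows s' = rows s := ⟨s, hst, rfl⟩
      rw [ho_def]
      simp only [dif_pos h]
      rw [hrows h.choose_spec.2]
    have o_neg : ∀ (t : Fin (m + 1)) (i : Fin n),
        (∀ s : Fin m, s.castSucc < t → rows s ≠ i) → o t i = y i := by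
      intro t i hi
      rw [ho_def]
      exact dif_neg (by rintro ⟨s, hs1, hs2⟩; exact hi s hs1 hs2)
    have u_pos : ∀ (t : Fin (m + 1)) (s : Fin m), s.castSucc < t →
        u t (cols s) = -y (rows s) := by
      intro t s hst
      have h : ∃ s' : Fin m, s'.castSucc < t ∧ cols s' = cols s := ⟨s, hst, rfl⟩
      rw [hu_def]
      simp only [dif_pos h]
      rw [hcols h.choose_spec.2]
    have u_neg : ∀ (t : Fin (m + 1)) (j : Fin n),
        (∀ s : Fin m, s.castSucc < t → cols s ≠ j) → u t j = x j := by
      intro t j hj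
      rw [hu_def]
      exact dif_neg (by rintro ⟨s, hs1, hs2⟩; exact hj s hs1 hs2)
    -- main invariant
    have inv : ∀ t : Fin (m + 1), ∀ i, o t i = ∑ j, seq t i j * u t j := by
      intro t
      induction t using Fin.induction with
      | zero =>
        intro i
        have h1 : ∀ s : Fin m, ¬ s.castSucc < (0 : Fin (m + 1)) := fun s => Fin.not_lt_zero _
        rw [o_neg 0 i (fun s hs => absurd hs (h1 s))]
        have h2 : ∀ j, u 0 j = x j := fun j => u_neg 0 j (fun s hs => absurd hs (h1 s))
        simp only [h2, h0, hy, Matrix.mulVec, dotProduct]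
      | succ t ih =>
        intro i
        obtain ⟨ha, hseq⟩ := hstep t
        set M := seq t.castSucc with hM
        set P := rows t with hP
        set K := cols t with hK
        -- behaviour of u at t.succ
        have huK : u t.succ K = -y P := u_pos t.succ t (Fin.castSucc_lt_succ (i := t))
        have huj : ∀ j, j ≠ K → u t.succ j = u t.castSucc j := by
          intro j hj
          by_cases h : ∃ s : Fin m, s.castSucc < t.castSucc ∧ cols s = j
          · obtain ⟨s, hs1, hs2⟩ := h
            rw [← hs2, u_pos t.succ s (hs1.trans (Fin.castSucc_lt_succ (i := t))),
              u_pos t.castSucc s hs1]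
          · push_neg at h
            rw [u_neg t.castSucc j h, u_neg t.succ j]
            intro s hs
            rcases eq_or_lt_of_le (Fin.castSucc_lt_succ_iff.mp hs) with h' | h'
            · rw [h']; exact fun hc => hj hc.symm
            · exact h s (Fin.castSucc_lt_castSucc_iff.mpr h')
        -- behaviour of o at t.succ
        have hoP : o t.succ P = -x K := o_pos t.succ t (Fin.castSucc_lt_succ (i := t))
        have hoi : ∀ i, i ≠ P → o t.succ i = o t.castSucc i := by
          intro i hi
          by_cases h : ∃ s : Fin m, s.castSucc < t.castSucc ∧ rows s = i
          · obtain ⟨s, hs1, hs2⟩ := h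
            rw [← hs2, o_pos t.succ s (hs1.trans (Fin.castSucc_lt_succ (i := t))),
              o_pos t.castSucc s hs1]
          · push_neg at h
            rw [o_neg t.castSucc i h, o_neg t.succ i]
            intro s hs
            rcases eq_or_lt_of_le (Fin.castSucc_lt_succ_iff.mp hs) with h' | h'
            · rw [h']; exact fun hc => hi hc.symm
            · exact h s (Fin.castSucc_lt_castSucc_iff.mpr h')
        -- old values at P and K
        have hoPold : o t.castSucc P = y P := by
          apply o_neg
          intro s hs hc
          have := hrows hc
          subst this
          exact absurd hs (lt_irrefl _)
        have huKold : u t.castSucc K = x K := by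
          apply u_neg
          intro s hs hc
          have := hcols hc
          subst this
          exact absurd hs (lt_irrefl _)
        -- the IH at P, split at K
        have hyP : y P = M P K * x K + ∑ j ∈ {K}ᶜ, M P j * u t.castSucc j := by
          have := ih P
          rw [hoPold, Fintype.sum_eq_add_sum_compl K, huKold] at this
          exact this
        rw [hseq]
        by_cases hi : i = P
        · subst hi
          rw [hoP, Fintype.sum_eq_add_sum_compl K, huK]
          have e1 : dictPivot M P K P K = (M P K)⁻¹ := by simp [dictPivot]
          have e2 : ∑ j ∈ ({K}ᶜ : Finset (Fin n)), dictPivot M P K P j * u t.succ j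
              = (∑ j ∈ ({K}ᶜ : Finset (Fin n)), M P j * u t.castSucc j) * (M P K)⁻¹ := by
            rw [Finset.sum_mul]
            apply Finset.sum_congr rfl
            intro j hj
            have hjK : j ≠ K := by simpa using hj
            rw [huj j hjK]
            have : dictPivot M P K P j = M P j / M P K := by simp [dictPivot, hjK]
            rw [this, div_eq_mul_inv]
            ring
          rw [e1, e2, hyP]
          field_simp
          ring
        · rw [hoi i hi, ih i, Fintype.sum_eq_add_sum_compl K (fun j => M i j * u t.castSucc j),
            Fintype.sum_eq_add_sum_compl K, huK, huKold]
          have e1 : dictPivot M P K i K = -(M i K) / M P K := by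
            simp [dictPivot, hi]
          have e2 : ∑ j ∈ ({K}ᶜ : Finset (Fin n)), dictPivot M P K i j * u t.succ j
              = (∑ j ∈ ({K}ᶜ : Finset (Fin n)), M i j * u t.castSucc j)
                - M i K * (M P K)⁻¹ * ∑ j ∈ ({K}ᶜ : Finset (Fin n)), M P j * u t.castSucc j := by
            rw [Finset.mul_sum, ← Finset.sum_sub_distrib]
            apply Finset.sum_congr rfl
            intro j hj
            have hjK : j ≠ K := by simpa using hj
            rw [huj j hjK]
            have : dictPivot M P K i j = M i j - M i K * M P j / M P K := by
              simp [dictPivot, hi, hjK]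
            rw [this, div_eq_mul_inv]
            ring
          rw [e1, e2, hyP]
          field_simp
          ring
    -- extract the relation at the last step
    have hfin := inv (Fin.last m) p
    have hop : o (Fin.last m) p = y p := by
      apply o_neg
      intro s _ hc
      exact hp ⟨s, hc⟩
    rw [hop] at hfin
    have hsum : (∑ j, seq (Fin.last m) p j * u (Fin.last m) j)
        = ∑ s : Fin m, seq (Fin.last m) p (cols s) * (-y (rows s)) := by
      have h2 : (∑ j ∈ Finset.univ.image cols, seq (Fin.last m) p j * u (Fin.last m) j)
          = ∑ j, seq (Fin.last m) p j * u (Fin.last m) j := by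
        apply Finset.sum_subset (Finset.subset_univ _)
        intro j _ hj
        have hjr : j ∉ Set.range cols := by
          rintro ⟨s, hs⟩
          exact hj (Finset.mem_image.mpr ⟨s, Finset.mem_univ s, hs⟩)
        rw [hrow j hjr, zero_mul]
      rw [← h2, Finset.sum_image (fun a _ b _ hab => hcols hab)]
      apply Finset.sum_congr rfl
      intro s _
      rw [u_pos (Fin.last m) s (Fin.castSucc_lt_last s)]
    rw [hsum] at hfin
    rw [hfin, ← Finset.sum_add_distrib]
    simp [mul_neg]
  -- build the nonzero left kernel vector
  set c : Fin m → F := fun s => seq (Fin.last m) p (cols s) with hc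
  set v : Fin n → F := fun i =>
    ((if i = p then 1 else 0) + ∑ s, (if rows s = i then c s else 0)) with hv
  have hdot : ∀ y : Fin n → F, dotProduct v y = y p + ∑ s, c s * y (rows s) := by
    intro y
    simp only [hv, dotProduct, add_mul, Finset.sum_add_distrib, Finset.sum_mul]
    congr 1
    · simp
    · rw [Finset.sum_comm]
      apply Finset.sum_congr rfl
      intro s _
      simp [ite_mul]
  have hvp : v p = 1 := by
    simp only [hv, if_pos rfl]
    have : ∀ s : Fin m, (if rows s = p then c s else 0) = 0 := by
      intro s
      rw [if_neg]
      intro hc'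
      exact hp ⟨s, hc'⟩
    rw [Finset.sum_congr rfl (fun s _ => this s)]
    simp
  have hvA : Matrix.vecMul v A = 0 := by
    funext j
    have h1 : dotProduct (Matrix.vecMul v A) (Pi.single j 1) = 0 := by
      rw [← Matrix.dotProduct_mulVec, hdot]
      exact key (Pi.single j 1)
    simpa [dotProduct, Pi.single_apply] using h1
  rw [← Matrix.exists_vecMul_eq_zero_iff]
  exact ⟨v, fun h => by rw [h] at hvp; exact one_ne_zero hvp.symm, hvA⟩
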